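/- Let V be a finite-dimensional vector space over ℝ or ℂ with a hermitian form such that V is nondegenerate, and let W be a nondegenerate proper subspace of V. Then there exists a nondegenerate subspace W' with W ≤ W' ≤ V and dim W' = dim W + 1. -/

import Mathlib

variable {𝕜 : Type*} [RCLike 𝕜] {V : Type*} [AddCommGroup V] [Module 𝕜 V]

/-- Orthogonal complement of a subspace with respect to a sesquilinear form
(linear in the first argument, conjugate-linear in the second). -/
def sperp (B : V →ₗ[𝕜] V →ₗ⋆[𝕜] 𝕜) (W : Submodule 𝕜 V) : Submodule 𝕜 V where
  carrier := {v | ∀ w ∈ W, B v w = 0}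
  zero_mem' := by intro w hw; simp
  add_mem' := by
    intro a b ha hb w hw
    simp only [Set.mem_setOf_eq] at ha hb
    simp [map_add, ha w hw, hb w hw]
  smul_mem' := by
    intro c a ha w hw
    simp only [Set.mem_setOf_eq] at ha
    simp [map_smul, ha w hw]

lemma sperp_antitone (B : V →ₗ[𝕜] V →ₗ⋆[𝕜] 𝕜) {W W' : Submodule 𝕜 V} (h : W ≤ W') :
    sperp B W' ≤ sperp B W := fun v hv w hw => hv w (h hw)

lemma conj_eq_self_of_I_eq_zero (h : (RCLike.I : 𝕜) = 0) (z : 𝕜) :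
    starRingEnd 𝕜 z = z := by
  rw [RCLike.conj_eq_re_sub_im, h, mul_zero, sub_zero]
  conv_rhs => rw [← RCLike.re_add_im z, h]
  rw [mul_zero, add_zero]

/-- Polarization: a hermitian form that vanishes on the diagonal of a
submodule vanishes on the submodule. -/
lemma polar_zero (B : V →ₗ[𝕜] V →ₗ⋆[𝕜] 𝕜)
    (hB : ∀ x y, B x y = starRingEnd 𝕜 (B y x)) {S : Submodule 𝕜 V}
    (h : ∀ x ∈ S, B x x = 0) : ∀ x ∈ S, ∀ y ∈ S, B x y = 0 := by
  intro x hx y hy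
  have h1 : B (x + y) (x + y) = 0 := h _ (S.add_mem hx hy)
  simp only [map_add, LinearMap.add_apply, h _ hx, h _ hy, zero_add, add_zero] at h1
  -- h1 : B x y + B y x = 0
  rcases RCLike.I_mul_I_ax (K := 𝕜) with hI | hI
  · -- real case: conjugation is the identity
    have := hB x y
    rw [conj_eq_self_of_I_eq_zero hI] at this
    have h2 : B x y + B x y = 0 := by rw [this] at h1 ⊢; linear_combination h1
    have : (2 : 𝕜) * B x y = 0 := by ring_nf; linear_combination h2
    simpa using (mul_eq_zero.mp this).resolve_left two_ne_zero
  · -- complex case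
    have h2 : B (x + RCLike.I • y) (x + RCLike.I • y) = 0 :=
      h _ (S.add_mem hx (S.smul_mem _ hy))
    simp only [map_add, map_smul, LinearMap.add_apply, LinearMap.smul_apply,
      LinearMap.map_smulₛₗ, RCLike.conj_I, smul_eq_mul, neg_mul,
      h _ hx, h _ hy, mul_zero, add_zero, zero_add] at h2
    -- h2 : -I * B x y + I * B y x = 0 (in some form)
    have hIne : (RCLike.I : 𝕜) ≠ 0 := by
      intro h0; rw [h0] at hI; simp at hI
    have hyx : B y x = B x y := by
      have : RCLike.I * (B y x - B x y) = 0 := by linear_combination h2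
      rcases mul_eq_zero.mp this with h' | h'
      · exact absurd h' hIne
      · exact sub_eq_zero.mp h'
    have : (2 : 𝕜) * B x y = 0 := by rw [hyx] at h1; linear_combination h1
    simpa using (mul_eq_zero.mp this).resolve_left two_ne_zero

/-- rank inequality: `dim V ≤ dim W + dim (sperp B W)`. -/
lemma finrank_le_sperp [FiniteDimensional 𝕜 V] (B : V →ₗ[𝕜] V →ₗ⋆[𝕜] 𝕜)
    (W : Submodule 𝕜 V) :
    Module.finrank 𝕜 V ≤ Module.finrank 𝕜 W + Module.finrank 𝕜 (sperp B W) := by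
  classical
  set n := Module.finrank 𝕜 W
  let b : Module.Basis (Fin n) 𝕜 W := Module.finBasis 𝕜 W
  let Φ : V →ₗ[𝕜] (Fin n → 𝕜) := LinearMap.pi (fun i => B.flip (b i))
  have hker : LinearMap.ker Φ ≤ sperp B W := by
    intro v hv w hw
    have hv' : ∀ i, B v (b i) = 0 := by
      intro i
      have := congrFun (LinearMap.mem_ker.mp hv) i
      simpa [Φ] using this
    have : (B v).comp W.subtype = 0 := by
      apply b.ext
      intro i
      simpa using hv' i
    have := congrArg (fun f => f ⟨w, hw⟩) this
    simpa using this
  have h1 : Module.finrank 𝕜 V =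
      Module.finrank 𝕜 (LinearMap.range Φ) + Module.finrank 𝕜 (LinearMap.ker Φ) :=
    (LinearMap.finrank_range_add_finrank_ker Φ).symm
  have h2 : Module.finrank 𝕜 (LinearMap.range Φ) ≤ n := by
    calc Module.finrank 𝕜 (LinearMap.range Φ) ≤ Module.finrank 𝕜 (Fin n → 𝕜) :=
          Submodule.finrank_le _
      _ = n := by simp
  have h3 : Module.finrank 𝕜 (LinearMap.ker Φ) ≤ Module.finrank 𝕜 (sperp B W) :=
    Submodule.finrank_mono hker
  omega

/-- If `V` is nondegenerate and `W` is a nondegenerate proper subspace, then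
there is a nondegenerate subspace `W'` with `W ≤ W'` and `dim W' = dim W + 1`. -/
theorem stmt_7 [FiniteDimensional 𝕜 V] (B : V →ₗ[𝕜] V →ₗ⋆[𝕜] 𝕜)
    (hB : ∀ x y, B x y = starRingEnd 𝕜 (B y x))
    (hV : sperp B ⊤ = ⊥) (W : Submodule 𝕜 V) (hW : W ⊓ sperp B W = ⊥)
    (hproper : W ≠ ⊤) :
    ∃ W' : Submodule 𝕜 V, W ≤ W' ∧ W' ⊓ sperp B W' = ⊥ ∧
      Module.finrank 𝕜 W' = Module.finrank 𝕜 W + 1 := by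
  classical
  -- W ⊔ sperp B W = ⊤
  have hsup : W ⊔ sperp B W = ⊤ := by
    apply Submodule.eq_top_of_finrank_eq
    have := Submodule.finrank_sup_add_finrank_inf_eq W (sperp B W)
    rw [hW] at this
    simp only [finrank_bot, add_zero] at this
    have hle := finrank_le_sperp B W
    have hle2 : Module.finrank 𝕜 ((W ⊔ sperp B W : Submodule 𝕜 V) : Submodule 𝕜 V)
        ≤ Module.finrank 𝕜 V := Submodule.finrank_le _
    omega
  -- sperp B W ≠ ⊥
  have hne : sperp B W ≠ ⊥ := by
    intro h0
    rw [h0, sup_bot_eq] at hsup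
    exact hproper hsup
  -- find an anisotropic vector in sperp B W
  have hexists : ∃ v ∈ sperp B W, B v v ≠ 0 := by
    by_contra hcon
    push_neg at hcon
    have hpolar := polar_zero B hB (S := sperp B W) hcon
    obtain ⟨u, hu, hune⟩ := Submodule.exists_mem_ne_zero_of_ne_bot hne
    have : u ∈ sperp B ⊤ := by
      intro z _
      have hz : z ∈ W ⊔ sperp B W := by rw [hsup]; trivial
      obtain ⟨w, hw, s, hs, rfl⟩ := Submodule.mem_sup.mp hz
      rw [map_add, hu w hw, hpolar u hu s hs, add_zero]
    rw [hV] at this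
    exact hune this
  obtain ⟨v, hv, hvv⟩ := hexists
  have hv0 : v ≠ 0 := by rintro rfl; simp at hvv
  have hvW : v ∉ W := by
    intro h
    have : v ∈ W ⊓ sperp B W := ⟨h, hv⟩
    rw [hW] at this
    exact hvv (by rw [(Submodule.mem_bot 𝕜).mp this]; simp)
  refine ⟨W ⊔ (𝕜 ∙ v), le_sup_left, ?_, ?_⟩
  · -- nondegeneracy of W'
    rw [eq_bot_iff]
    rintro x ⟨hx1, hx2⟩
    obtain ⟨w, hw, s, hs, rfl⟩ := Submodule.mem_sup.mp hx1
    obtain ⟨c, rfl⟩ := Submodule.mem_span_singleton.mp hs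
    have hvmem : v ∈ W ⊔ (𝕜 ∙ v) := Submodule.mem_sup_right (Submodule.mem_span_singleton_self v)
    have hBv : B (w + c • v) v = 0 := hx2 v hvmem
    have hBwv : B w v = 0 := by
      rw [hB w v, hv w hw, map_zero]
    rw [map_add, LinearMap.add_apply, map_smul, LinearMap.smul_apply, hBwv, zero_add,
      smul_eq_mul] at hBv
    have hc : c = 0 := by
      rcases mul_eq_zero.mp hBv with h | h
      · exact h
      · exact absurd h hvv
    subst hc
    rw [zero_smul, add_zero] at hx2 ⊢
    have : w ∈ W ⊓ sperp B W :=
      ⟨hw, sperp_antitone B le_sup_left hx2⟩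
    rw [hW] at this
    simpa using this
  · -- dimension
    have hinf : W ⊓ (𝕜 ∙ v) = ⊥ := by
      rw [eq_bot_iff]
      rintro x ⟨hx1, hx2⟩
      obtain ⟨c, rfl⟩ := Submodule.mem_span_singleton.mp hx2
      rcases eq_or_ne c 0 with rfl | hc
      · simp
      · have hvm := W.smul_mem c⁻¹ hx1
        rw [inv_smul_smul₀ hc] at hvm
        exact absurd hvm hvW
    have := Submodule.finrank_sup_add_finrank_inf_eq W (𝕜 ∙ v)
    rw [hinf, finrank_span_singleton hv0] at this
    simp only [finrank_bot, add_zero] at this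
    omega
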